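/- Let A₁,…,Aₙ be positive semidefinite complex Hermitian m×m matrices and let B be a complex Hermitian m×m matrix. Then the polynomial f(z₁,…,zₙ) = det(z₁A₁ + z₂A₂ + ⋯ + zₙAₙ + B) has all real coefficients and is either real stable or identically zero. -/

import Mathlib

open MvPolynomial ComplexOrder
open Matrix

def IsStable {σ : Type*} (f : MvPolynomial σ ℂ) : Prop :=
  ∀ z : σ → ℂ, (∀ i, 0 < (z i).im) → eval z f ≠ 0

def IsRealStable {σ : Type*} (f : MvPolynomial σ ℝ) : Prop :=
  IsStable (f.map (algebraMap ℝ ℂ))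

theorem stmt15 {n m : ℕ} (A : Fin n → Matrix (Fin m) (Fin m) ℂ)
    (B : Matrix (Fin m) (Fin m) ℂ)
    (hA : ∀ i, (A i).PosSemidef) (hB : B.IsHermitian) :
    ∃ g : MvPolynomial (Fin n) ℝ,
      g.map (algebraMap ℝ ℂ) =
        Matrix.det (∑ i, (X i : MvPolynomial (Fin n) ℂ) • (A i).map C + B.map C) ∧
      (IsRealStable g ∨ g = 0) := by
  set M : Matrix (Fin m) (Fin m) (MvPolynomial (Fin n) ℂ) :=
    ∑ i, (X i : MvPolynomial (Fin n) ℂ) • (A i).map C + B.map C with hM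
  set f : MvPolynomial (Fin n) ℂ := M.det with hf
  -- evaluation formula
  have heval : ∀ z : Fin n → ℂ, eval z f = Matrix.det (∑ i, z i • A i + B) := by
    intro z
    rw [hf, RingHom.map_det]
    congr 1
    ext j k
    simp [hM, Matrix.map_apply, Matrix.sum_apply, Matrix.add_apply, Matrix.smul_apply,
      smul_eq_mul]
  -- conjugation symmetry
  have hconj : f.map (starRingEnd ℂ) = f := by
    have hMt : M.map (MvPolynomial.map (starRingEnd ℂ)) = Mᵀ := by
      ext j k
      have hAe : ∀ i, (starRingEnd ℂ) (A i j k) = A i k j := by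
        intro i
        have h := (hA i).isHermitian
        rw [Matrix.IsHermitian] at h
        conv_rhs => rw [← h]
        simp [Matrix.conjTranspose_apply]
      have hBe : (starRingEnd ℂ) (B j k) = B k j := by
        conv_rhs => rw [← hB]
        simp [Matrix.conjTranspose_apply]
      simp [hM, Matrix.map_apply, Matrix.sum_apply, Matrix.add_apply, Matrix.smul_apply,
        smul_eq_mul, Matrix.transpose_apply, map_X, map_C, hAe, hBe]
    rw [hf, RingHom.map_det,
      show (MvPolynomial.map (starRingEnd ℂ)).mapMatrix M =
        M.map (MvPolynomial.map (starRingEnd ℂ)) from rfl, hMt, Matrix.det_transpose]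
  -- coefficients are real
  have hcoeff : ∀ d, ((f.coeff d).re : ℂ) = f.coeff d := by
    intro d
    have h := congrArg (fun p => coeff d p) hconj
    simp only [coeff_map] at h
    exact Complex.conj_eq_iff_re.mp h
  -- the real polynomial g
  have hg : (∑ d ∈ f.support, monomial d ((f.coeff d).re)).map (algebraMap ℝ ℂ) = f := by
    rw [map_sum]
    simp only [map_monomial]
    calc (∑ d ∈ f.support, monomial d ((algebraMap ℝ ℂ) ((f.coeff d).re)))
        = ∑ d ∈ f.support, monomial d (f.coeff d) :=
          Finset.sum_congr rfl fun d _ => by rw [Complex.coe_algebraMap, hcoeff]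
      _ = f := support_sum_monomial_coeff f
  refine ⟨∑ d ∈ f.support, monomial d ((f.coeff d).re), hg, ?_⟩
  by_cases hst : ∀ z : Fin n → ℂ, (∀ i, 0 < (z i).im) → eval z f ≠ 0
  · left
    unfold IsRealStable IsStable
    rw [hg]
    exact hst
  · right
    push_neg at hst
    obtain ⟨z, hz, hz0⟩ := hst
    rw [heval z] at hz0
    obtain ⟨v, hv, hNv⟩ := Matrix.exists_mulVec_eq_zero_iff.mpr hz0
    have hsum : ∀ w : Fin n → ℂ,
        (∑ i, w i • A i + B) *ᵥ v = ∑ i, w i • (A i *ᵥ v) + B *ᵥ v := by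
      intro w
      rw [Matrix.add_mulVec]
      congr 1
      rw [show ((∑ i, w i • A i) *ᵥ v) =
        Matrix.mulVec.addMonoidHomLeft v (∑ i, w i • A i) from rfl, map_sum]
      simp [Matrix.mulVec.addMonoidHomLeft, Matrix.smul_mulVec]
    have hdsum : star v ⬝ᵥ (∑ i, z i • (A i *ᵥ v)) =
        ∑ i, z i * (star v ⬝ᵥ (A i *ᵥ v)) := by
      simp only [dotProduct, Finset.sum_apply, Pi.smul_apply, smul_eq_mul,
        Finset.mul_sum]
      rw [Finset.sum_comm]
      exact Finset.sum_congr rfl fun i _ => Finset.sum_congr rfl fun k _ => by ring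
    have h0 : (∑ i, z i * (star v ⬝ᵥ (A i *ᵥ v))) + star v ⬝ᵥ (B *ᵥ v) = 0 := by
      rw [← hdsum, ← dotProduct_add, ← hsum z, hNv, dotProduct_zero]
    -- b := star v ⬝ᵥ B *ᵥ v is real
    have hbre : (star v ⬝ᵥ (B *ᵥ v)).im = 0 := by
      have h1 : star (star v ⬝ᵥ (B *ᵥ v)) = star v ⬝ᵥ (B *ᵥ v) := by
        conv_lhs => rw [Matrix.star_dotProduct, star_star]
        rw [Matrix.star_mulVec, hB.eq, ← Matrix.dotProduct_mulVec]
      have h2 := congrArg Complex.im h1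
      rw [Complex.star_def, Complex.conj_im] at h2
      linarith
    have ha : ∀ i, 0 ≤ star v ⬝ᵥ (A i *ᵥ v) := fun i => (hA i).dotProduct_mulVec_nonneg v
    have haim : ∀ i, (star v ⬝ᵥ (A i *ᵥ v)).im = 0 := fun i =>
      ((Complex.nonneg_iff.mp (ha i)).2).symm
    have hare : ∀ i, 0 ≤ (star v ⬝ᵥ (A i *ᵥ v)).re := fun i =>
      (Complex.nonneg_iff.mp (ha i)).1
    -- take imaginary parts
    have him : ∑ i, (z i).im * (star v ⬝ᵥ (A i *ᵥ v)).re = 0 := by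
      have h2 := congrArg Complex.im h0
      simp only [Complex.add_im, Complex.im_sum, Complex.mul_im, Complex.zero_im] at h2
      calc ∑ i, (z i).im * (star v ⬝ᵥ (A i *ᵥ v)).re
          = ∑ i, ((z i).re * (star v ⬝ᵥ (A i *ᵥ v)).im
              + (z i).im * (star v ⬝ᵥ (A i *ᵥ v)).re) := by
            refine Finset.sum_congr rfl fun i _ => ?_; rw [haim i]; ring
        _ = 0 := by rw [← hbre] at h2 ⊢; linarith [h2]
    have hterm : ∀ i ∈ Finset.univ, (0:ℝ) ≤ (z i).im * (star v ⬝ᵥ (A i *ᵥ v)).re :=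
      fun i _ => mul_nonneg (le_of_lt (hz i)) (hare i)
    have hAv : ∀ i, A i *ᵥ v = 0 := by
      intro i
      have h3 := (Finset.sum_eq_zero_iff_of_nonneg hterm).mp him i (Finset.mem_univ i)
      have h4 : (star v ⬝ᵥ (A i *ᵥ v)).re = 0 := by
        rcases mul_eq_zero.mp h3 with h | h
        · exact absurd h (ne_of_gt (hz i))
        · exact h
      have h5 : star v ⬝ᵥ (A i *ᵥ v) = 0 := Complex.ext h4 (haim i)
      exact ((hA i).dotProduct_mulVec_zero_iff v).mp h5
    have hBv : B *ᵥ v = 0 := by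
      have h6 := hsum z
      rw [hNv] at h6
      simp [hAv] at h6
      exact h6.symm
    have hf0 : f = 0 := by
      apply MvPolynomial.funext
      intro w
      rw [heval w, map_zero]
      apply Matrix.exists_mulVec_eq_zero_iff.mp
      exact ⟨v, hv, by rw [hsum w]; simp [hAv, hBv]⟩
    apply MvPolynomial.map_injective (algebraMap ℝ ℂ) (algebraMap ℝ ℂ).injective
    rw [hg, hf0, map_zero]
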